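/- There exists an absolute constant c > 0 with the following property. Let S, A be finite nonempty sets, μ a distribution on S×A, M* = (P*, R*) with R* : S×A → [0,1] and P*(s'|s,a) > 0 for all (s,a,s'), Vmax ≥ 1, and let M be a finite class of models M = (P_M, R_M) with R_M : S×A → [0,1] and P_M everywhere positive, containing M*. Let the dataset consist of n i.i.d. tuples (s_i, a_i, r_i, s'_i) with (s_i, a_i) ~ μ, s'_i ~ P*(·|s_i, a_i), r_i ∈ [0,1] with E[r_i | s_i, a_i] = R*(s_i, a_i). Then for any δ ∈ (0,1], with probability at least 1 − δ: E_D(M*) − min_{M ∈ M} E_D(M) ≤ c · log(|M|/δ), where E_D(M) = Σ_{i=1}^n ( −log P_M(s'_i|s_i,a_i) + (R_M(s_i,a_i) − r_i)²/Vmax² ). -/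

import Mathlib

open MeasureTheory Finset

/-! ### Auxiliary real-analysis lemmas -/

lemma exp_taylor_bound {y : ℝ} (hy : |y| ≤ 1) : Real.exp y ≤ 1 + y + (3/4) * y^2 := by
  have h := Real.exp_bound hy (by norm_num : (0:ℕ) < 2)
  simp [Finset.sum_range_succ, Nat.factorial] at h
  have h2 := (abs_sub_le_iff.1 h).1
  nlinarith [sq_abs y]

lemma per_sample_young {r : ℝ} (hr : 0 < r) (Δ : ℝ) :
    Real.exp ((Real.log r + Δ)/4) ≤ r/4 + (3/4) * Real.exp (Δ/3) := by
  have hcon : Real.HolderConjugate 4 (4/3) := ⟨by norm_num, by norm_num, by norm_num⟩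
  have hy := Real.young_inequality_of_nonneg
    (Real.rpow_nonneg hr.le (4:ℝ)⁻¹) (Real.exp_pos (Δ/4)).le hcon
  have e1 : Real.exp ((Real.log r + Δ)/4) = r ^ ((4:ℝ)⁻¹) * Real.exp (Δ/4) := by
    rw [Real.rpow_def_of_pos hr, ← Real.exp_add]
    ring_nf
  have e2 : (r ^ ((4:ℝ)⁻¹)) ^ (4:ℝ) = r := by
    rw [← Real.rpow_mul hr.le]; norm_num
  have e3 : (Real.exp (Δ/4)) ^ ((4:ℝ)/3) = Real.exp (Δ/3) := by
    rw [← Real.exp_one_rpow (Δ/4), ← Real.rpow_mul (Real.exp_pos 1).le,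
      Real.exp_one_rpow]
    congr 1; ring
  rw [e1]
  calc r ^ ((4:ℝ)⁻¹) * Real.exp (Δ/4)
      ≤ (r ^ ((4:ℝ)⁻¹)) ^ (4:ℝ) / 4 + (Real.exp (Δ/4)) ^ ((4:ℝ)/3) / (4/3) := hy
    _ = r/4 + (3/4) * Real.exp (Δ/3) := by rw [e2, e3]; ring

lemma reward_exp_bound {a b rr V : ℝ} (ha : a ∈ Set.Icc (0:ℝ) 1) (hb : b ∈ Set.Icc (0:ℝ) 1)
    (hr : rr ∈ Set.Icc (0:ℝ) 1) (hV : 1 ≤ V) :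
    Real.exp (((a - rr)^2 - (b - rr)^2)/V^2/3)
      ≤ (1 + (a^2 - b^2)/(3*V^2) + (a-b)^2/(3*V^4)) - (2*(a-b)/(3*V^2))*rr := by
  obtain ⟨ha0, ha1⟩ := ha
  obtain ⟨hb0, hb1⟩ := hb
  obtain ⟨hr0, hr1⟩ := hr
  have hV0 : (0:ℝ) < V := lt_of_lt_of_le one_pos hV
  have hV2 : (1:ℝ) ≤ V^2 := by nlinarith
  have hV4 : (0:ℝ) < V^4 := by positivity
  set N : ℝ := (a-b)*(a+b-2*rr) with hNdef
  have hNabs : |N| ≤ 2 := by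
    have h1 : |a-b| ≤ 1 := abs_le.mpr ⟨by linarith, by linarith⟩
    have h2 : |a+b-2*rr| ≤ 2 := abs_le.mpr ⟨by linarith, by linarith⟩
    calc |N| = |a-b| * |a+b-2*rr| := abs_mul _ _
      _ ≤ 1 * 2 := mul_le_mul h1 h2 (abs_nonneg _) zero_le_one
      _ = 2 := by ring
  have hexpo : ((a - rr)^2 - (b - rr)^2)/V^2/3 = N/(3*V^2) := by
    field_simp; ring
  set y : ℝ := N/(3*V^2) with hydef
  have hyabs : |y| ≤ 1 := by
    have : |y| = |N|/(3*V^2) := by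
      rw [hydef, abs_div, abs_of_pos (by positivity : (0:ℝ) < 3*V^2)]
    rw [this]
    calc |N|/(3*V^2) ≤ 2/3 := div_le_div₀ (by norm_num) hNabs (by norm_num) (by nlinarith)
      _ ≤ 1 := by norm_num
  have hexp := exp_taylor_bound hyabs
  rw [hexpo]
  have hN2 : N^2 ≤ 4*(a-b)^2 := by
    have h2 : (a+b-2*rr)^2 ≤ 4 := by nlinarith
    calc N^2 = (a-b)^2*(a+b-2*rr)^2 := by rw [hNdef]; ring
      _ ≤ (a-b)^2*4 := mul_le_mul_of_nonneg_left h2 (sq_nonneg _)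
      _ = 4*(a-b)^2 := by ring
  have hy2 : y^2 = N^2/(9*V^4) := by rw [hydef, div_pow]; ring_nf
  have key : (3/4) * y^2 ≤ (a-b)^2/(3*V^4) := by
    rw [hy2]
    have h5 : N^2/(12*V^4) ≤ (4*(a-b)^2)/(12*V^4) := by gcongr
    calc (3/4) * (N^2/(9*V^4)) = N^2/(12*V^4) := by ring
      _ ≤ (4*(a-b)^2)/(12*V^4) := h5
      _ = (a-b)^2/(3*V^4) := by ring
  have lin : (1 + (a^2 - b^2)/(3*V^2) + (a-b)^2/(3*V^4)) - (2*(a-b)/(3*V^2))*rr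
      = 1 + y + (a-b)^2/(3*V^4) := by
    rw [hydef, hNdef]; field_simp; ring
  rw [lin]
  linarith

lemma mean_exp_bound {a b V : ℝ} (hV : 1 ≤ V) :
    (1 + (a^2 - b^2)/(3*V^2) + (a-b)^2/(3*V^4)) - (2*(a-b)/(3*V^2))*a ≤ 1 := by
  have hV0 : (0:ℝ) < V := lt_of_lt_of_le one_pos hV
  have hV2 : (1:ℝ) ≤ V^2 := by nlinarith
  have h1 : (a-b)^2/(3*V^4) ≤ (a-b)^2/(3*V^2) := by
    apply div_le_div_of_nonneg_left (sq_nonneg _) (by positivity)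
    nlinarith
  have h2 : (a^2 - b^2)/(3*V^2) - (2*(a-b)/(3*V^2))*a = -((a-b)^2/(3*V^2)) := by
    field_simp; ring
  linarith

/-! ### Measure-theoretic helper lemmas -/

lemma partition_nullMeasurable {Ω K : Type*} [MeasurableSpace Ω] [Fintype K]
    (ν : Measure Ω) [IsProbabilityMeasure ν] (C : K → Set Ω)
    (hcov : (⋃ k, C k) = Set.univ)
    (hsum : ∑ k, ν (C k) = 1) (k : K) : NullMeasurableSet (C k) ν := by
  classical
  set H := toMeasurable ν (C k) with hH
  have hHm : MeasurableSet H := measurableSet_toMeasurable ν (C k)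
  have hCH : C k ⊆ H := subset_toMeasurable ν (C k)
  have hνH : ν H = ν (C k) := measure_toMeasurable (C k)
  have hz : ∀ l, l ≠ k → ν (C l ∩ H) = 0 := by
    intro l hl
    have hsplit : ν (C l ∩ H) + ν (C l \ H) = ν (C l) := measure_inter_add_diff _ hHm
    have hRsum : ν (C k) + ν (C l) + ∑ m ∈ univ \ ({k, l} : Finset K), ν (C m) = 1 := by
      rw [← hsum, ← Finset.sum_sdiff (Finset.subset_univ ({k, l} : Finset K))]
      rw [Finset.sum_pair (Ne.symm hl)]
      ring
    have hcover2 : (1:ENNReal) ≤ ν (C k ∪ C l) + ∑ m ∈ univ \ ({k, l} : Finset K), ν (C m) := by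
      have hsub : (Set.univ : Set Ω) ⊆
          (C k ∪ C l) ∪ ⋃ m ∈ (univ \ ({k, l} : Finset K) : Finset K), C m := by
        intro p _
        have hp : p ∈ ⋃ m, C m := by rw [hcov]; trivial
        obtain ⟨m, hm⟩ := Set.mem_iUnion.1 hp
        by_cases hmk : m = k
        · exact Or.inl (Or.inl (hmk ▸ hm))
        by_cases hml : m = l
        · exact Or.inl (Or.inr (hml ▸ hm))
        · exact Or.inr (Set.mem_biUnion
            (Finset.mem_sdiff.mpr ⟨Finset.mem_univ m, by simp [hmk, hml]⟩) hm)
      calc (1:ENNReal) = ν Set.univ := (measure_univ).symm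
        _ ≤ ν ((C k ∪ C l) ∪ ⋃ m ∈ (univ \ ({k, l} : Finset K) : Finset K), C m) :=
            measure_mono hsub
        _ ≤ ν (C k ∪ C l) + ν (⋃ m ∈ (univ \ ({k, l} : Finset K) : Finset K), C m) :=
            measure_union_le _ _
        _ ≤ ν (C k ∪ C l) + ∑ m ∈ univ \ ({k, l} : Finset K), ν (C m) := by
            gcongr
            exact measure_biUnion_finset_le _ _
    have hSne : ∑ m ∈ univ \ ({k, l} : Finset K), ν (C m) ≠ ⊤ :=
      (ENNReal.sum_lt_top.mpr (fun m _ => measure_lt_top ν (C m))).ne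
    have hpair : ν (C k) + ν (C l) ≤ ν (C k ∪ C l) :=
      (ENNReal.add_le_add_iff_right hSne).1 (hRsum ▸ hcover2)
    have hub : ν (C k ∪ C l) ≤ ν (C k) + ν (C l \ H) := by
      calc ν (C k ∪ C l) = ν ((C k ∪ C l) ∩ H) + ν ((C k ∪ C l) \ H) :=
            (measure_inter_add_diff _ hHm).symm
        _ ≤ ν H + ν (C l \ H) := by
            refine add_le_add (measure_mono Set.inter_subset_right) (measure_mono ?_)
            intro p hp
            rcases hp.1 with h | h
            · exact absurd (hCH h) hp.2
            · exact ⟨h, hp.2⟩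
        _ = ν (C k) + ν (C l \ H) := by rw [hνH]
    have hCl_le : ν (C l) ≤ ν (C l \ H) :=
      (ENNReal.add_le_add_iff_left (measure_ne_top ν (C k))).1 (hpair.trans hub)
    have hfin : ν (C l ∩ H) + ν (C l \ H) ≤ 0 + ν (C l \ H) := by
      rw [hsplit, zero_add]; exact hCl_le
    exact le_antisymm
      (by simpa using (ENNReal.add_le_add_iff_right (measure_ne_top ν (C l \ H))).1 hfin)
      zero_le
  have hnull : ν (H \ C k) = 0 := by
    have hsub : H \ C k ⊆ ⋃ l ∈ Finset.univ.erase k, (C l ∩ H) := by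
      intro p hp
      have hpU : p ∈ ⋃ m, C m := by rw [hcov]; trivial
      obtain ⟨m, hm⟩ := Set.mem_iUnion.1 hpU
      have hmk : m ≠ k := fun h => hp.2 (h ▸ hm)
      exact Set.mem_biUnion (Finset.mem_erase.mpr ⟨hmk, Finset.mem_univ m⟩) ⟨hm, hp.1⟩
    refine le_antisymm ?_ zero_le
    calc ν (H \ C k) ≤ ν (⋃ l ∈ Finset.univ.erase k, (C l ∩ H)) := measure_mono hsub
      _ ≤ ∑ l ∈ Finset.univ.erase k, ν (C l ∩ H) := measure_biUnion_finset_le _ _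
      _ = 0 := Finset.sum_eq_zero (fun l hl => hz l (Finset.mem_erase.1 hl).1)
  refine hHm.nullMeasurableSet.congr ?_
  rw [MeasureTheory.ae_eq_set]
  refine ⟨hnull, ?_⟩
  rw [Set.diff_eq_empty.mpr hCH]; exact measure_empty

lemma partition_fun_aemeasurable_lintegral {Ω K : Type*} [MeasurableSpace Ω] [Fintype K]
    (ν : Measure Ω) (C : K → Set Ω) (hC : ∀ k, NullMeasurableSet (C k) ν)
    (idx : Ω → K) (hidx : ∀ p k, p ∈ C k ↔ k = idx p)
    (φ : K → Ω → ENNReal) (hφ : ∀ k, Measurable (φ k)) :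
    AEMeasurable (fun p => φ (idx p) p) ν ∧
      ∫⁻ p, φ (idx p) p ∂ν = ∑ k, ∫⁻ p in C k, φ k p ∂ν := by
  classical
  have heq : (fun p => φ (idx p) p) = fun p => ∑ k, (C k).indicator (φ k) p := by
    funext p
    rw [Finset.sum_eq_single (idx p)]
    · rw [Set.indicator_of_mem ((hidx p (idx p)).2 rfl)]
    · intro k _ hk
      exact Set.indicator_of_notMem (fun hmem => hk ((hidx p k).1 hmem)) _
    · intro h; exact absurd (Finset.mem_univ _) h
  constructor
  · rw [heq]
    exact Finset.aemeasurable_fun_sum _ (fun k _ => ((hφ k).aemeasurable).indicator₀ (hC k))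
  · rw [heq, lintegral_finset_sum' _ (fun k _ => ((hφ k).aemeasurable).indicator₀ (hC k))]
    exact Finset.sum_congr rfl (fun k _ => lintegral_indicator₀ (hC k) _)

lemma lintegral_union_partition {Ω X : Type*} [MeasurableSpace Ω] [Fintype X]
    (ν : Measure Ω) (C : X → Set Ω) (hC : ∀ x, NullMeasurableSet (C x) ν)
    (hdisj : ∀ x y, x ≠ y → Disjoint (C x) (C y)) (h : Ω → ENNReal) (hm : Measurable h) :
    ∫⁻ p in ⋃ x, C x, h p ∂ν = ∑ x, ∫⁻ p in C x, h p ∂ν := by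
  classical
  have hind : (⋃ x, C x).indicator h = fun p => ∑ x, (C x).indicator h p := by
    funext p
    by_cases hp : p ∈ ⋃ x, C x
    · obtain ⟨x0, hx0⟩ := Set.mem_iUnion.1 hp
      rw [Set.indicator_of_mem hp, Finset.sum_eq_single x0]
      · rw [Set.indicator_of_mem hx0]
      · intro x _ hx
        exact Set.indicator_of_notMem
          (fun hmem => (hdisj x x0 hx).ne_of_mem hmem hx0 rfl) _
      · intro hx; exact absurd (Finset.mem_univ _) hx
    · rw [Set.indicator_of_notMem hp, eq_comm]
      refine Finset.sum_eq_zero (fun x _ => ?_)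
      exact Set.indicator_of_notMem (fun hmem => hp (Set.mem_iUnion.2 ⟨x, hmem⟩)) _
  rw [← lintegral_indicator₀ (NullMeasurableSet.iUnion hC), hind,
    lintegral_finset_sum' _ (fun x _ => (hm.aemeasurable).indicator₀ (hC x))]
  exact Finset.sum_congr rfl (fun x _ => lintegral_indicator₀ (hC x) _)

lemma lintegral_pi_pow {E : Type*} [MeasurableSpace E] (μ : Measure E) [IsProbabilityMeasure μ]
    (f : E → ENNReal) (hf : Measurable f) (n : ℕ) :
    ∫⁻ x : Fin n → E, ∏ j, f (x j) ∂(Measure.pi fun _ => μ) = (∫⁻ x, f x ∂μ) ^ n := by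
  induction n with
  | zero => simp
  | succ n ih =>
    have hmp := MeasureTheory.measurePreserving_piFinSuccAbove (fun _ : Fin (n+1) => μ) 0
    have hF : Measurable (fun y : E × (Fin n → E) => f y.1 * ∏ j, f (y.2 j)) := by
      apply Measurable.mul (hf.comp measurable_fst)
      exact Finset.measurable_prod _
        (fun j _ => hf.comp ((measurable_pi_apply j).comp measurable_snd))
    calc ∫⁻ x : Fin (n+1) → E, ∏ j, f (x j) ∂(Measure.pi fun _ => μ)
        = ∫⁻ x : Fin (n+1) → E,
            (fun y : E × (Fin n → E) => f y.1 * ∏ j, f (y.2 j))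
              ((MeasurableEquiv.piFinSuccAbove (fun _ => E) 0) x) ∂(Measure.pi fun _ => μ) := by
          apply lintegral_congr
          intro x
          simp only [MeasurableEquiv.piFinSuccAbove_apply]
          rw [Fin.prod_univ_succAbove (fun j => f (x j)) 0]
          rfl
      _ = ∫⁻ y : E × (Fin n → E), f y.1 * ∏ j, f (y.2 j) ∂(μ.prod (Measure.pi fun _ => μ)) :=
          hmp.lintegral_comp hF
      _ = (∫⁻ x, f x ∂μ) * ∫⁻ x : Fin n → E, ∏ j, f (x j) ∂(Measure.pi fun _ => μ) := by
          exact lintegral_prod_mul (f := f) (g := fun v : Fin n → E => ∏ j, f (v j))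
            hf.aemeasurable
            (Finset.measurable_prod _ (fun j _ => hf.comp (measurable_pi_apply j))).aemeasurable
      _ = (∫⁻ x, f x ∂μ) ^ (n+1) := by rw [ih]; ring

/-! ### Partition sets and the per-sample dominating function -/

def Cset {S A : Type} (k : (S × A) × S) : Set (S × A × ℝ × S) :=
  {p | p.1 = k.1.1 ∧ p.2.1 = k.1.2 ∧ p.2.2.2 = k.2}

def Bset {S A : Type} (q : S × A) : Set (S × A × ℝ × S) :=
  {p | p.1 = q.1 ∧ p.2.1 = q.2}

lemma mem_Cset_iff {S A : Type} (p : S × A × ℝ × S) (k : (S × A) × S) :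
    p ∈ Cset k ↔ k = ((p.1, p.2.1), p.2.2.2) := by
  simp only [Cset, Set.mem_setOf_eq, Prod.ext_iff]
  constructor
  · rintro ⟨h1, h2, h3⟩; exact ⟨⟨h1.symm, h2.symm⟩, h3.symm⟩
  · rintro ⟨⟨h1, h2⟩, h3⟩; exact ⟨h1.symm, h2.symm, h3.symm⟩

lemma iUnion_Cset {S A : Type} : (⋃ k, Cset (S := S) (A := A) k) = Set.univ := by
  refine Set.eq_univ_of_forall (fun p => Set.mem_iUnion.2 ⟨((p.1, p.2.1), p.2.2.2), ?_⟩)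
  rw [mem_Cset_iff]

lemma Cset_disjoint {S A : Type} {k l : (S × A) × S} (h : k ≠ l) :
    Disjoint (Cset (S := S) (A := A) k) (Cset l) := by
  rw [Set.disjoint_left]
  intro p hk hl
  rw [mem_Cset_iff] at hk hl
  exact h (hk.trans hl.symm)

lemma Bset_eq_iUnion {S A : Type} (q : S × A) :
    Bset (S := S) (A := A) q = ⋃ x, Cset (q, x) := by
  ext p
  simp only [Bset, Cset, Set.mem_setOf_eq, Set.mem_iUnion]
  constructor
  · rintro ⟨h1, h2⟩; exact ⟨p.2.2.2, h1, h2, rfl⟩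
  · rintro ⟨x, h1, h2, _⟩; exact ⟨h1, h2⟩

noncomputable def gfun {S A : Type} (Pstar PMi : S × A → S → ℝ) (Rstar RMi : S × A → ℝ)
    (Vmax : ℝ) (p : S × A × ℝ × S) : ENNReal :=
  ENNReal.ofReal (PMi (p.1, p.2.1) p.2.2.2 / Pstar (p.1, p.2.1) p.2.2.2 / 4
    + (3/4) * Real.exp ((((Rstar (p.1, p.2.1) - p.2.2.1)^2
        - (RMi (p.1, p.2.1) - p.2.2.1)^2)/Vmax^2)/3))


/-- The model-fitting loss of a model `(P, R)` on a dataset of tuples `(s, a, r, s')`: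
`E_D(M) = ∑ⱼ (−log P(s'ⱼ|sⱼ,aⱼ) + (R(sⱼ,aⱼ) − rⱼ)²/Vmax²)`. -/
noncomputable def edLoss {S A : Type*} {n : ℕ} (P : S × A → S → ℝ) (R : S × A → ℝ)
    (Vmax : ℝ) (data : Fin n → S × A × ℝ × S) : ℝ :=
  ∑ j : Fin n,
    (-Real.log (P ((data j).1, (data j).2.1) (data j).2.2.2)
      + (R ((data j).1, (data j).2.1) - (data j).2.2.1) ^ 2 / Vmax ^ 2)

/-- the true model nearly minimizes the model-fitting loss.
There is an absolute constant `c > 0` such that: the single-sample law `ν` on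
`S × A × ℝ × S` draws `(s,a) ∼ μ` (weights `μw`), `s' ∼ P*(·|s,a)` (densities `Pstar`),
and a reward `r ∈ [0,1]` a.s. with conditional mean `E[r|s,a] = R*(s,a)`; the dataset of
`n` tuples is i.i.d. (product measure).  For a finite class of everywhere positive
models `(PM i, RM i)` containing `M* = (P*, R*)` and `Vmax ≥ 1`, with probability at
least `1 − δ`:  `E_D(M*) − min_M E_D(M) ≤ c log(|M|/δ)`. -/
theorem true_model_nearly_minimizes_fitting_loss :
    ∃ c : ℝ, 0 < c ∧
      ∀ (S A : Type) [Fintype S] [Fintype A] [Nonempty S] [Nonempty A]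
        [MeasurableSpace S] [MeasurableSpace A]
        (μw : S × A → ℝ), (∀ q, 0 ≤ μw q) → (∑ q : S × A, μw q = 1) →
      ∀ (Pstar : S × A → S → ℝ),
        (∀ q x, 0 < Pstar q x) → (∀ q, ∑ x : S, Pstar q x = 1) →
      ∀ (Rstar : S × A → ℝ), (∀ q, Rstar q ∈ Set.Icc (0 : ℝ) 1) →
      ∀ (Vmax : ℝ), 1 ≤ Vmax →
      ∀ (ι : Type) [Fintype ι] [Nonempty ι]
        (PM : ι → S × A → S → ℝ) (RM : ι → S × A → ℝ),
        (∀ i q x, 0 < PM i q x) → (∀ i q, ∑ x : S, PM i q x = 1) →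
        (∀ i q, RM i q ∈ Set.Icc (0 : ℝ) 1) →
        (∃ istar, PM istar = Pstar ∧ RM istar = Rstar) →
      ∀ (n : ℕ)
        (ν : Measure (S × A × ℝ × S)) [IsProbabilityMeasure ν],
        (∀ (s : S) (a : A) (x : S),
          ν {p : S × A × ℝ × S | p.1 = s ∧ p.2.1 = a ∧ p.2.2.2 = x}
            = ENNReal.ofReal (μw (s, a) * Pstar (s, a) x)) →
        (∀ᵐ p ∂ν, p.2.2.1 ∈ Set.Icc (0 : ℝ) 1) →
        (∀ (s : S) (a : A),
          ∫ p in {p : S × A × ℝ × S | p.1 = s ∧ p.2.1 = a}, p.2.2.1 ∂ν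
            = μw (s, a) * Rstar (s, a)) →
      ∀ (δ : ℝ), δ ∈ Set.Ioc (0 : ℝ) 1 →
      ENNReal.ofReal (1 - δ) ≤
        (Measure.pi fun _ : Fin n => ν)
          {data | edLoss Pstar Rstar Vmax data
              - univ.inf' univ_nonempty (fun i => edLoss (PM i) (RM i) Vmax data)
              ≤ c * Real.log ((Fintype.card ι : ℝ) / δ)} := by
  classical
  refine ⟨4, by norm_num, ?_⟩
  intro S A _ _ _ _ _ _ μw hμw0 hμw1 Pstar hP0 hP1 Rstar hR Vmax hV ι _ _ PM RM
    hPM0 hPM1 hRM _hstar n ν _ hνjoint hνr hνR δ hδ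
  obtain ⟨hδ0, hδ1⟩ := hδ
  have hmr : Measurable (fun p : S × A × ℝ × S => p.2.2.1) :=
    measurable_fst.comp (measurable_snd.comp measurable_snd)
  have hcard1 : 1 ≤ (Fintype.card ι : ℝ) := by exact_mod_cast Fintype.card_pos
  set t : ℝ := (Fintype.card ι : ℝ) / δ with ht
  have ht0 : 0 < t := by positivity
  have ht1 : 1 ≤ t := by rw [ht, le_div_iff₀ hδ0]; linarith
  have hlog0 : 0 ≤ Real.log t := Real.log_nonneg ht1
  -- basic facts about the partition
  have hνC : ∀ k : (S × A) × S, ν (Cset k) = ENNReal.ofReal (μw k.1 * Pstar k.1 k.2) := by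
    rintro ⟨⟨s, a⟩, x⟩
    exact hνjoint s a x
  have hws : ∑ k : (S × A) × S, μw k.1 * Pstar k.1 k.2 = 1 := by
    rw [Fintype.sum_prod_type]
    calc ∑ q : S × A, ∑ x : S, μw q * Pstar q x
        = ∑ q : S × A, μw q * ∑ x, Pstar q x := by simp [Finset.mul_sum]
      _ = 1 := by simp only [hP1, mul_one]; exact hμw1
  have hsum1 : ∑ k : (S × A) × S, ν (Cset k) = 1 := by
    simp only [hνC]
    rw [← ENNReal.ofReal_sum_of_nonneg (fun k _ => mul_nonneg (hμw0 _) (hP0 _ _).le), hws,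
      ENNReal.ofReal_one]
  have hCnull : ∀ k, NullMeasurableSet (Cset k) ν :=
    partition_nullMeasurable ν Cset iUnion_Cset hsum1
  have hνB : ∀ q : S × A, ν (Bset q) = ENNReal.ofReal (μw q) := by
    intro q
    rw [Bset_eq_iUnion q,
      measure_iUnion₀
        (fun x y hxy => (Cset_disjoint (by simpa using hxy :
            ((q, x) : (S × A) × S) ≠ (q, y))).aedisjoint)
        (fun x => hCnull (q, x)),
      tsum_fintype]
    simp only [hνC]
    rw [← ENNReal.ofReal_sum_of_nonneg (fun x _ => mul_nonneg (hμw0 _) (hP0 _ _).le)]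
    congr 1
    rw [← Finset.mul_sum, hP1 q, mul_one]
  -- the per-(s,a) reward moment bound
  have hreward : ∀ (i : ι) (q : S × A),
      ∫⁻ p in Bset q, ENNReal.ofReal ((3/4) * Real.exp ((((Rstar q - p.2.2.1)^2
          - (RM i q - p.2.2.1)^2)/Vmax^2)/3)) ∂ν ≤ ENNReal.ofReal ((3/4) * μw q) := by
    intro i q
    obtain ⟨Kc, hKc⟩ : ∃ k : ℝ, k = 1 + ((Rstar q)^2 - (RM i q)^2)/(3*Vmax^2)
        + (Rstar q - RM i q)^2/(3*Vmax^4) := ⟨_, rfl⟩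
    obtain ⟨Lc, hLc⟩ : ∃ l : ℝ, l = 2*(Rstar q - RM i q)/(3*Vmax^2) := ⟨_, rfl⟩
    have hrae : ∀ᵐ p ∂(ν.restrict (Bset q)), p.2.2.1 ∈ Set.Icc (0:ℝ) 1 :=
      ae_restrict_of_ae hνr
    have hbd : ∀ᵐ p ∂(ν.restrict (Bset q)),
        Real.exp ((((Rstar q - p.2.2.1)^2 - (RM i q - p.2.2.1)^2)/Vmax^2)/3)
          ≤ Kc - Lc * p.2.2.1 := by
      filter_upwards [hrae] with p hp
      rw [hKc, hLc]
      exact reward_exp_bound (hR q) (hRM i q) hp hV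
    have hint_r : Integrable (fun p : S × A × ℝ × S => p.2.2.1) (ν.restrict (Bset q)) := by
      refine Integrable.mono' (integrable_const 1) hmr.aestronglyMeasurable ?_
      filter_upwards [hrae] with p hp
      rw [Real.norm_eq_abs]
      exact abs_le.mpr ⟨by linarith [hp.1], hp.2⟩
    have haff_int : Integrable (fun p : S × A × ℝ × S => (3/4) * (Kc - Lc * p.2.2.1))
        (ν.restrict (Bset q)) :=
      (((integrable_const Kc).sub (hint_r.const_mul Lc)).const_mul _)
    have haff_nn : 0 ≤ᵐ[ν.restrict (Bset q)]
        (fun p : S × A × ℝ × S => (3/4) * (Kc - Lc * p.2.2.1)) := by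
      filter_upwards [hbd] with p hp
      have h0 := (Real.exp_pos (((Rstar q - p.2.2.1)^2 - (RM i q - p.2.2.1)^2)/Vmax^2/3)).le.trans hp
      simp only [Pi.zero_apply]
      linarith
    have hμB : (ν.restrict (Bset q)) Set.univ = ENNReal.ofReal (μw q) := by
      rw [Measure.restrict_apply_univ, hνB q]
    calc ∫⁻ p in Bset q, ENNReal.ofReal ((3/4) * Real.exp ((((Rstar q - p.2.2.1)^2
            - (RM i q - p.2.2.1)^2)/Vmax^2)/3)) ∂ν
        ≤ ∫⁻ p in Bset q, ENNReal.ofReal ((3/4) * (Kc - Lc * p.2.2.1)) ∂ν := by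
          refine lintegral_mono_ae ?_
          filter_upwards [hbd] with p hp
          exact ENNReal.ofReal_le_ofReal (by linarith)
      _ = ENNReal.ofReal (∫ p in Bset q, (3/4) * (Kc - Lc * p.2.2.1) ∂ν) :=
          (ofReal_integral_eq_lintegral_ofReal haff_int haff_nn).symm
      _ ≤ ENNReal.ofReal ((3/4) * μw q) := by
          apply ENNReal.ofReal_le_ofReal
          have hi1 : ∫ p in Bset q, (3/4) * (Kc - Lc * p.2.2.1) ∂ν
              = (3/4) * (Kc * μw q - Lc * (μw q * Rstar q)) := by
            rw [integral_const_mul]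
            congr 1
            have : ∫ p in Bset q, (Kc - Lc * p.2.2.1) ∂ν
                = ∫ p in Bset q, Kc ∂ν - Lc * ∫ p in Bset q, p.2.2.1 ∂ν := by
              rw [integral_sub (integrable_const Kc) (hint_r.const_mul Lc),
                integral_const_mul]
            rw [this, integral_const, smul_eq_mul, measureReal_def, hμB,
              ENNReal.toReal_ofReal (hμw0 q)]
            have hBq : ∫ p in Bset q, p.2.2.1 ∂ν = μw q * Rstar q := by
              have := hνR q.1 q.2
              simpa [Bset] using this
            rw [hBq]
            ring
          rw [hi1]
          have hmean : Kc - Lc * Rstar q ≤ 1 := by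
            rw [hKc, hLc]; exact mean_exp_bound hV
          have h2 : Kc * μw q - Lc * (μw q * Rstar q) = μw q * (Kc - Lc * Rstar q) := by ring
          have h3 : μw q * (Kc - Lc * Rstar q) ≤ μw q := by
            simpa using mul_le_mul_of_nonneg_left hmean (hμw0 q)
          linarith
  -- the dominating one-sample function and its integral bound
  have hφmeas : ∀ (i : ι) (k : (S × A) × S),
      Measurable (fun p : S × A × ℝ × S => ENNReal.ofReal (PM i k.1 k.2 / Pstar k.1 k.2 / 4
        + (3/4) * Real.exp ((((Rstar k.1 - p.2.2.1)^2 - (RM i k.1 - p.2.2.1)^2)/Vmax^2)/3))) := by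
    intro i k
    have hcont : Continuous (fun r : ℝ => PM i k.1 k.2 / Pstar k.1 k.2 / 4
        + (3/4) * Real.exp ((((Rstar k.1 - r)^2 - (RM i k.1 - r)^2)/Vmax^2)/3)) := by
      fun_prop
    exact ENNReal.measurable_ofReal.comp ((hcont.measurable).comp hmr)
  have hpart := fun i : ι => partition_fun_aemeasurable_lintegral ν Cset hCnull
    (fun p => ((p.1, p.2.1), p.2.2.2)) mem_Cset_iff
    (fun k p => ENNReal.ofReal (PM i k.1 k.2 / Pstar k.1 k.2 / 4
        + (3/4) * Real.exp ((((Rstar k.1 - p.2.2.1)^2 - (RM i k.1 - p.2.2.1)^2)/Vmax^2)/3)))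
    (hφmeas i)
  have hgae : ∀ i : ι, AEMeasurable (gfun Pstar (PM i) Rstar (RM i) Vmax) ν := fun i =>
    (hpart i).1
  have hgint : ∀ i : ι, ∫⁻ p, gfun Pstar (PM i) Rstar (RM i) Vmax p ∂ν ≤ 1 := by
    intro i
    have hper : ∀ k : (S × A) × S,
        ∫⁻ p in Cset k, ENNReal.ofReal (PM i k.1 k.2 / Pstar k.1 k.2 / 4
          + (3/4) * Real.exp ((((Rstar k.1 - p.2.2.1)^2
              - (RM i k.1 - p.2.2.1)^2)/Vmax^2)/3)) ∂ν
        = ENNReal.ofReal (PM i k.1 k.2 / Pstar k.1 k.2 / 4) * ν (Cset k)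
          + ∫⁻ p in Cset k, ENNReal.ofReal ((3/4) * Real.exp ((((Rstar k.1 - p.2.2.1)^2
              - (RM i k.1 - p.2.2.1)^2)/Vmax^2)/3)) ∂ν := by
      intro k
      have hsplit : ∀ p : S × A × ℝ × S,
          ENNReal.ofReal (PM i k.1 k.2 / Pstar k.1 k.2 / 4
            + (3/4) * Real.exp ((((Rstar k.1 - p.2.2.1)^2
                - (RM i k.1 - p.2.2.1)^2)/Vmax^2)/3))
          = ENNReal.ofReal (PM i k.1 k.2 / Pstar k.1 k.2 / 4)
            + ENNReal.ofReal ((3/4) * Real.exp ((((Rstar k.1 - p.2.2.1)^2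
                - (RM i k.1 - p.2.2.1)^2)/Vmax^2)/3)) := by
        intro p
        rw [ENNReal.ofReal_add
          (div_nonneg (div_nonneg (hPM0 i _ _).le (hP0 _ _).le) (by norm_num))
          (by positivity)]
      calc ∫⁻ p in Cset k, ENNReal.ofReal (PM i k.1 k.2 / Pstar k.1 k.2 / 4
            + (3/4) * Real.exp ((((Rstar k.1 - p.2.2.1)^2
                - (RM i k.1 - p.2.2.1)^2)/Vmax^2)/3)) ∂ν
          = ∫⁻ p in Cset k, (ENNReal.ofReal (PM i k.1 k.2 / Pstar k.1 k.2 / 4)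
              + ENNReal.ofReal ((3/4) * Real.exp ((((Rstar k.1 - p.2.2.1)^2
                - (RM i k.1 - p.2.2.1)^2)/Vmax^2)/3))) ∂ν := by
            exact lintegral_congr (fun p => hsplit p)
        _ = ENNReal.ofReal (PM i k.1 k.2 / Pstar k.1 k.2 / 4) * ν (Cset k)
              + ∫⁻ p in Cset k, ENNReal.ofReal ((3/4) * Real.exp ((((Rstar k.1 - p.2.2.1)^2
                - (RM i k.1 - p.2.2.1)^2)/Vmax^2)/3)) ∂ν := by
            rw [lintegral_add_left measurable_const, setLIntegral_const]
    have hT1 : ∑ k : (S × A) × S, ENNReal.ofReal (PM i k.1 k.2 / Pstar k.1 k.2 / 4) * ν (Cset k)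
        = ENNReal.ofReal (1/4 : ℝ) := by
      have hterm : ∀ k : (S × A) × S,
          ENNReal.ofReal (PM i k.1 k.2 / Pstar k.1 k.2 / 4) * ν (Cset k)
          = ENNReal.ofReal (μw k.1 * PM i k.1 k.2 / 4) := by
        intro k
        rw [hνC k, ← ENNReal.ofReal_mul
          (div_nonneg (div_nonneg (hPM0 i _ _).le (hP0 _ _).le) (by norm_num))]
        congr 1
        have hC0 : Pstar k.1 k.2 ≠ 0 := (hP0 _ _).ne'
        field_simp
      simp only [hterm]
      rw [← ENNReal.ofReal_sum_of_nonneg (fun k _ =>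
        div_nonneg (mul_nonneg (hμw0 _) (hPM0 _ _ _).le) (by norm_num))]
      congr 1
      rw [Fintype.sum_prod_type]
      calc ∑ q : S × A, ∑ x : S, μw q * PM i q x / 4
          = ∑ q : S × A, (μw q * ∑ x, PM i q x) / 4 := by
            refine Finset.sum_congr rfl (fun q _ => ?_)
            rw [Finset.mul_sum, Finset.sum_div]
        _ = (1:ℝ)/4 := by
            simp only [hPM1, mul_one]
            rw [← Finset.sum_div, hμw1]
    have hT2 : ∑ k : (S × A) × S, (∫⁻ p in Cset k,
          ENNReal.ofReal ((3/4) * Real.exp ((((Rstar k.1 - p.2.2.1)^2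
            - (RM i k.1 - p.2.2.1)^2)/Vmax^2)/3)) ∂ν)
        ≤ ENNReal.ofReal (3/4 : ℝ) := by
      rw [Fintype.sum_prod_type]
      have hinner : ∀ q : S × A, ∑ x : S, (∫⁻ p in Cset (q, x),
            ENNReal.ofReal ((3/4) * Real.exp ((((Rstar q - p.2.2.1)^2
              - (RM i q - p.2.2.1)^2)/Vmax^2)/3)) ∂ν)
          = ∫⁻ p in Bset q, ENNReal.ofReal ((3/4) * Real.exp ((((Rstar q - p.2.2.1)^2
              - (RM i q - p.2.2.1)^2)/Vmax^2)/3)) ∂ν := by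
        intro q
        rw [Bset_eq_iUnion q, lintegral_union_partition ν (fun x => Cset (q, x))
          (fun x => hCnull (q, x))
          (fun x y hxy => Cset_disjoint (by simpa using hxy : ((q,x) : (S×A)×S) ≠ (q,y)))
          _ (by
            have hcont : Continuous (fun r : ℝ => (3/4) * Real.exp ((((Rstar q - r)^2
                - (RM i q - r)^2)/Vmax^2)/3)) := by fun_prop
            exact ENNReal.measurable_ofReal.comp ((hcont.measurable).comp hmr))]
      calc ∑ q : S × A, ∑ x : S, (∫⁻ p in Cset (q, x),
              ENNReal.ofReal ((3/4) * Real.exp ((((Rstar q - p.2.2.1)^2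
                - (RM i q - p.2.2.1)^2)/Vmax^2)/3)) ∂ν)
          = ∑ q : S × A, ∫⁻ p in Bset q, ENNReal.ofReal ((3/4)
              * Real.exp ((((Rstar q - p.2.2.1)^2
                - (RM i q - p.2.2.1)^2)/Vmax^2)/3)) ∂ν :=
            Finset.sum_congr rfl (fun q _ => hinner q)
        _ ≤ ∑ q : S × A, ENNReal.ofReal ((3/4) * μw q) :=
            Finset.sum_le_sum (fun q _ => hreward i q)
        _ = ENNReal.ofReal (3/4 : ℝ) := by
            rw [← ENNReal.ofReal_sum_of_nonneg (fun q _ =>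
              mul_nonneg (by norm_num) (hμw0 q))]
            congr 1
            rw [← Finset.mul_sum, hμw1, mul_one]
    calc ∫⁻ p, gfun Pstar (PM i) Rstar (RM i) Vmax p ∂ν
        = ∑ k : (S × A) × S, ∫⁻ p in Cset k,
            ENNReal.ofReal (PM i k.1 k.2 / Pstar k.1 k.2 / 4
              + (3/4) * Real.exp ((((Rstar k.1 - p.2.2.1)^2
                - (RM i k.1 - p.2.2.1)^2)/Vmax^2)/3)) ∂ν := (hpart i).2
      _ = (∑ k : (S × A) × S, ENNReal.ofReal (PM i k.1 k.2 / Pstar k.1 k.2 / 4) * ν (Cset k))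
            + ∑ k : (S × A) × S, (∫⁻ p in Cset k,
              ENNReal.ofReal ((3/4) * Real.exp ((((Rstar k.1 - p.2.2.1)^2
                - (RM i k.1 - p.2.2.1)^2)/Vmax^2)/3)) ∂ν) := by
          rw [← Finset.sum_add_distrib]
          exact Finset.sum_congr rfl (fun k _ => hper k)
      _ ≤ ENNReal.ofReal (1/4 : ℝ) + ENNReal.ofReal (3/4 : ℝ) := by
          rw [hT1]
          exact add_le_add_right hT2 _
      _ = 1 := by
          rw [← ENNReal.ofReal_add (by norm_num) (by norm_num)]
          norm_num
  -- pointwise Young inequality at each sample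
  have hYoung : ∀ (i : ι) (p : S × A × ℝ × S),
      ENNReal.ofReal (Real.exp (((-Real.log (Pstar (p.1, p.2.1) p.2.2.2)
          + (Rstar (p.1, p.2.1) - p.2.2.1) ^ 2 / Vmax ^ 2)
        - (-Real.log (PM i (p.1, p.2.1) p.2.2.2)
          + (RM i (p.1, p.2.1) - p.2.2.1) ^ 2 / Vmax ^ 2)) / 4))
      ≤ gfun Pstar (PM i) Rstar (RM i) Vmax p := by
    intro i p
    apply ENNReal.ofReal_le_ofReal
    have hratio : 0 < PM i (p.1, p.2.1) p.2.2.2 / Pstar (p.1, p.2.1) p.2.2.2 :=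
      div_pos (hPM0 i _ _) (hP0 _ _)
    have hexp_eq : ((-Real.log (Pstar (p.1, p.2.1) p.2.2.2)
          + (Rstar (p.1, p.2.1) - p.2.2.1) ^ 2 / Vmax ^ 2)
        - (-Real.log (PM i (p.1, p.2.1) p.2.2.2)
          + (RM i (p.1, p.2.1) - p.2.2.1) ^ 2 / Vmax ^ 2)) / 4
        = (Real.log (PM i (p.1, p.2.1) p.2.2.2 / Pstar (p.1, p.2.1) p.2.2.2)
            + ((Rstar (p.1, p.2.1) - p.2.2.1) ^ 2
              - (RM i (p.1, p.2.1) - p.2.2.1) ^ 2) / Vmax ^ 2) / 4 := by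
      rw [Real.log_div (hPM0 i _ _).ne' (hP0 _ _).ne']
      ring
    rw [hexp_eq]
    exact per_sample_young hratio _
  -- per-model bad events are small
  have hbad : ∀ i : ι, (Measure.pi fun _ : Fin n => ν)
      {data | 4 * Real.log t
        < edLoss Pstar Rstar Vmax data - edLoss (PM i) (RM i) Vmax data}
      ≤ ENNReal.ofReal (δ / (Fintype.card ι : ℝ)) := by
    intro i
    obtain ⟨gm, hgm_meas, hgm_ae⟩ := hgae i
    have hfactor : ∀ j : Fin n,
        (fun data : Fin n → S × A × ℝ × S => gfun Pstar (PM i) Rstar (RM i) Vmax (data j))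
          =ᵐ[Measure.pi fun _ : Fin n => ν] (fun data => gm (data j)) := fun j =>
      (Measure.tendsto_eval_ae_ae (μ := fun _ : Fin n => ν) (i := j)).eventually hgm_ae
    have hprod_ae : (fun data : Fin n → S × A × ℝ × S
          => ∏ j, gfun Pstar (PM i) Rstar (RM i) Vmax (data j))
        =ᵐ[Measure.pi fun _ : Fin n => ν] (fun data => ∏ j, gm (data j)) := by
      have hall := (MeasureTheory.ae_all_iff).2 hfactor
      filter_upwards [hall] with data hd
      exact Finset.prod_congr rfl (fun j _ => hd j)
    have hgmprod_meas : Measurable (fun data : Fin n → S × A × ℝ × S => ∏ j, gm (data j)) :=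
      Finset.measurable_prod _ (fun j _ => hgm_meas.comp (measurable_pi_apply j))
    have hGae : AEMeasurable (fun data : Fin n → S × A × ℝ × S
        => ∏ j, gfun Pstar (PM i) Rstar (RM i) Vmax (data j)) (Measure.pi fun _ : Fin n => ν) :=
      hgmprod_meas.aemeasurable.congr hprod_ae.symm
    have hGint : ∫⁻ data, ∏ j, gfun Pstar (PM i) Rstar (RM i) Vmax (data j)
        ∂(Measure.pi fun _ : Fin n => ν) ≤ 1 := by
      rw [lintegral_congr_ae hprod_ae, lintegral_pi_pow ν gm hgm_meas n]
      have heq : ∫⁻ x, gm x ∂ν = ∫⁻ x, gfun Pstar (PM i) Rstar (RM i) Vmax x ∂ν :=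
        lintegral_congr_ae hgm_ae.symm
      rw [heq]
      exact pow_le_one' (hgint i) n
    have hsubset : {data : Fin n → S × A × ℝ × S | 4 * Real.log t
          < edLoss Pstar Rstar Vmax data - edLoss (PM i) (RM i) Vmax data}
        ⊆ {data | ENNReal.ofReal t
            ≤ ∏ j, gfun Pstar (PM i) Rstar (RM i) Vmax (data j)} := by
      intro data hdata
      simp only [Set.mem_setOf_eq] at hdata ⊢
      have hDsum : edLoss Pstar Rstar Vmax data - edLoss (PM i) (RM i) Vmax data
          = ∑ j : Fin n, ((-Real.log (Pstar ((data j).1, (data j).2.1) (data j).2.2.2)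
              + (Rstar ((data j).1, (data j).2.1) - (data j).2.2.1) ^ 2 / Vmax ^ 2)
            - (-Real.log (PM i ((data j).1, (data j).2.1) (data j).2.2.2)
              + (RM i ((data j).1, (data j).2.1) - (data j).2.2.1) ^ 2 / Vmax ^ 2)) := by
        simp only [edLoss]
        rw [← Finset.sum_sub_distrib]
      have h1 : t ≤ Real.exp ((edLoss Pstar Rstar Vmax data
          - edLoss (PM i) (RM i) Vmax data) / 4) := by
        rw [← Real.exp_log ht0]
        exact Real.exp_le_exp.2 (by linarith)
      calc ENNReal.ofReal t
          ≤ ENNReal.ofReal (Real.exp ((edLoss Pstar Rstar Vmax data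
              - edLoss (PM i) (RM i) Vmax data) / 4)) := ENNReal.ofReal_le_ofReal h1
        _ = ∏ j : Fin n, ENNReal.ofReal (Real.exp
              (((-Real.log (Pstar ((data j).1, (data j).2.1) (data j).2.2.2)
                + (Rstar ((data j).1, (data j).2.1) - (data j).2.2.1) ^ 2 / Vmax ^ 2)
              - (-Real.log (PM i ((data j).1, (data j).2.1) (data j).2.2.2)
                + (RM i ((data j).1, (data j).2.1) - (data j).2.2.1) ^ 2 / Vmax ^ 2)) / 4)) := by
            rw [hDsum, Finset.sum_div, Real.exp_sum,
              ENNReal.ofReal_prod_of_nonneg (fun j _ => (Real.exp_pos _).le)]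
        _ ≤ ∏ j, gfun Pstar (PM i) Rstar (RM i) Vmax (data j) :=
            Finset.prod_le_prod' (fun j _ => hYoung i (data j))
    have hne0 : ENNReal.ofReal t ≠ 0 := by
      simp only [Ne, ENNReal.ofReal_eq_zero, not_le]
      exact ht0
    have hmarkov := mul_meas_ge_le_lintegral₀ hGae (ENNReal.ofReal t)
    calc (Measure.pi fun _ : Fin n => ν) {data | 4 * Real.log t
          < edLoss Pstar Rstar Vmax data - edLoss (PM i) (RM i) Vmax data}
        ≤ (Measure.pi fun _ : Fin n => ν) {data | ENNReal.ofReal t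
            ≤ ∏ j, gfun Pstar (PM i) Rstar (RM i) Vmax (data j)} := measure_mono hsubset
      _ = (ENNReal.ofReal t)⁻¹ * (ENNReal.ofReal t * (Measure.pi fun _ : Fin n => ν)
            {data | ENNReal.ofReal t
              ≤ ∏ j, gfun Pstar (PM i) Rstar (RM i) Vmax (data j)}) := by
          rw [← mul_assoc, ENNReal.inv_mul_cancel hne0 ENNReal.ofReal_ne_top, one_mul]
      _ ≤ (ENNReal.ofReal t)⁻¹ * 1 := by
          gcongr
          exact hmarkov.trans hGint
      _ = ENNReal.ofReal (δ / (Fintype.card ι : ℝ)) := by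
          rw [mul_one, ← ENNReal.ofReal_inv_of_pos ht0]
          congr 1
          rw [ht, inv_div]
  -- assemble via a union bound
  have hUnion : (Measure.pi fun _ : Fin n => ν) (⋃ i : ι, {data : Fin n → S × A × ℝ × S |
        4 * Real.log t < edLoss Pstar Rstar Vmax data - edLoss (PM i) (RM i) Vmax data})
      ≤ ENNReal.ofReal δ := by
    calc (Measure.pi fun _ : Fin n => ν) (⋃ i : ι, {data : Fin n → S × A × ℝ × S |
          4 * Real.log t < edLoss Pstar Rstar Vmax data - edLoss (PM i) (RM i) Vmax data})
        ≤ ∑' i : ι, (Measure.pi fun _ : Fin n => ν) {data : Fin n → S × A × ℝ × S |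
            4 * Real.log t < edLoss Pstar Rstar Vmax data - edLoss (PM i) (RM i) Vmax data} :=
          measure_iUnion_le _
      _ = ∑ i : ι, (Measure.pi fun _ : Fin n => ν) {data : Fin n → S × A × ℝ × S |
            4 * Real.log t < edLoss Pstar Rstar Vmax data - edLoss (PM i) (RM i) Vmax data} :=
          tsum_fintype _
      _ ≤ ∑ _i : ι, ENNReal.ofReal (δ / (Fintype.card ι : ℝ)) :=
          Finset.sum_le_sum (fun i _ => hbad i)
      _ = (Fintype.card ι : ENNReal) * ENNReal.ofReal (δ / (Fintype.card ι : ℝ)) := by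
          rw [Finset.sum_const, nsmul_eq_mul, Finset.card_univ]
      _ = ENNReal.ofReal δ := by
          rw [← ENNReal.ofReal_natCast (Fintype.card ι),
            ← ENNReal.ofReal_mul (by positivity)]
          congr 1
          have : (Fintype.card ι : ℝ) ≠ 0 := by positivity
          field_simp
  have hsplit : (1 : ENNReal) ≤ (Measure.pi fun _ : Fin n => ν)
        {data | edLoss Pstar Rstar Vmax data
            - univ.inf' univ_nonempty (fun i => edLoss (PM i) (RM i) Vmax data)
            ≤ 4 * Real.log t}
      + (Measure.pi fun _ : Fin n => ν) (⋃ i : ι, {data : Fin n → S × A × ℝ × S |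
          4 * Real.log t < edLoss Pstar Rstar Vmax data - edLoss (PM i) (RM i) Vmax data}) := by
    have hcover : (Set.univ : Set (Fin n → S × A × ℝ × S))
        ⊆ {data | edLoss Pstar Rstar Vmax data
            - univ.inf' univ_nonempty (fun i => edLoss (PM i) (RM i) Vmax data)
            ≤ 4 * Real.log t}
          ∪ ⋃ i : ι, {data : Fin n → S × A × ℝ × S |
            4 * Real.log t < edLoss Pstar Rstar Vmax data - edLoss (PM i) (RM i) Vmax data} := by
      intro data _
      by_cases h : edLoss Pstar Rstar Vmax data
          - univ.inf' univ_nonempty (fun i => edLoss (PM i) (RM i) Vmax data)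
          ≤ 4 * Real.log t
      · exact Or.inl h
      · right
        push_neg at h
        have hinf : univ.inf' univ_nonempty (fun i => edLoss (PM i) (RM i) Vmax data)
            < edLoss Pstar Rstar Vmax data - 4 * Real.log t := by linarith
        rw [Finset.inf'_lt_iff] at hinf
        obtain ⟨i, -, hi⟩ := hinf
        exact Set.mem_iUnion.2 ⟨i, by simp only [Set.mem_setOf_eq]; linarith⟩
    calc (1 : ENNReal) = (Measure.pi fun _ : Fin n => ν) Set.univ := measure_univ.symm
      _ ≤ (Measure.pi fun _ : Fin n => ν) ({data | edLoss Pstar Rstar Vmax data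
            - univ.inf' univ_nonempty (fun i => edLoss (PM i) (RM i) Vmax data)
            ≤ 4 * Real.log t}
          ∪ ⋃ i : ι, {data : Fin n → S × A × ℝ × S |
            4 * Real.log t < edLoss Pstar Rstar Vmax data
              - edLoss (PM i) (RM i) Vmax data}) := measure_mono hcover
      _ ≤ _ := measure_union_le _ _
  have hfinal : (1 : ENNReal) ≤ (Measure.pi fun _ : Fin n => ν)
        {data | edLoss Pstar Rstar Vmax data
            - univ.inf' univ_nonempty (fun i => edLoss (PM i) (RM i) Vmax data)
            ≤ 4 * Real.log t}
      + ENNReal.ofReal δ := hsplit.trans (add_le_add_right hUnion _)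
  have hδeq : ENNReal.ofReal (1 - δ) + ENNReal.ofReal δ = 1 := by
    rw [← ENNReal.ofReal_add (by linarith) hδ0.le]
    norm_num
  rw [← hδeq] at hfinal
  exact (ENNReal.add_le_add_iff_right ENNReal.ofReal_ne_top).1 hfinal
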